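/- arXiv:math/0502088 — 4 statements merged into one kernel-verified Lean document; each statement's English description precedes it below -/
import Mathlib

section
/- For any ℓ ≥ 1 and any paravectors u_1, …, u_ℓ in S ⊕ V ⊂ Cl(0,n), the symmetrized product E(u_1,…,u_ℓ) = (1/ℓ!) Σ_{σ ∈ S_ℓ} u_{σ(1)} ⋯ u_{σ(ℓ)} is itself a paravector, i.e., lies in S ⊕ V. -/
open CliffordAlgebra

noncomputable def Qneg (n : ℕ) : QuadraticForm ℝ (Fin n → ℝ) :=
  QuadraticMap.weightedSumSquares ℝ (fun _ : Fin n => (-1 : ℝ))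

/-- The paravector subspace `S ⊕ V` of `Cl(0,n)`. -/
noncomputable def Paravector (n : ℕ) : Submodule ℝ (CliffordAlgebra (Qneg n)) :=
  Submodule.span ℝ {1} ⊔ LinearMap.range (ι (Qneg n))

/-- symmetrized product of a tuple -/
noncomputable def symE {A : Type*} [Ring A] [Algebra ℝ A] {ℓ : ℕ} (u : Fin ℓ → A) : A :=
  ((ℓ.factorial : ℝ)⁻¹) • ∑ σ : Equiv.Perm (Fin ℓ), (List.ofFn fun i => u (σ i)).prod

/-- symmetrized product of a list -/
noncomputable def symL {A : Type*} [Ring A] [Algebra ℝ A] (L : List A) : A :=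
  ((L.length.factorial : ℝ)⁻¹) •
    ∑ σ : Equiv.Perm (Fin L.length), (List.ofFn fun i => L.get (σ i)).prod

namespace ParavectorAux

variable {n : ℕ}

lemma smul_one_mem (r : ℝ) : (r • 1 : CliffordAlgebra (Qneg n)) ∈ Paravector n :=
  Submodule.mem_sup_left (Submodule.smul_mem _ r (Submodule.mem_span_singleton_self 1))

lemma ι_mem (m : Fin n → ℝ) : ι (Qneg n) m ∈ Paravector n :=
  Submodule.mem_sup_right (LinearMap.mem_range_self _ m)

lemma mem_iff {x : CliffordAlgebra (Qneg n)} :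
    x ∈ Paravector n ↔ ∃ r : ℝ, ∃ m : Fin n → ℝ, x = r • 1 + ι (Qneg n) m := by
  constructor
  · intro hx
    rw [Paravector, Submodule.mem_sup] at hx
    obtain ⟨y, hy, z, hz, rfl⟩ := hx
    obtain ⟨r, rfl⟩ := Submodule.mem_span_singleton.1 hy
    obtain ⟨m, rfl⟩ := hz
    exact ⟨r, m, rfl⟩
  · rintro ⟨r, m, rfl⟩
    exact Submodule.add_mem _ (smul_one_mem r) (ι_mem m)

lemma reverse_fix {x : CliffordAlgebra (Qneg n)} (hx : x ∈ Paravector n) :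
    reverse (Q := Qneg n) x = x := by
  obtain ⟨r, m, rfl⟩ := mem_iff.1 hx
  simp [reverse_ι]

/-- anticommutator of two paravectors is a paravector -/
lemma anticomm_mem {x y : CliffordAlgebra (Qneg n)} (hx : x ∈ Paravector n)
    (hy : y ∈ Paravector n) : x * y + y * x ∈ Paravector n := by
  obtain ⟨r, a, rfl⟩ := mem_iff.1 hx
  obtain ⟨s, b, rfl⟩ := mem_iff.1 hy
  have h2 : ι (Qneg n) b * ι (Qneg n) a =
      (QuadraticMap.polar (Qneg n) a b) • (1 : CliffordAlgebra (Qneg n)) -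
        ι (Qneg n) a * ι (Qneg n) b := by
    refine eq_sub_of_add_eq ?_
    rw [add_comm, ← Algebra.algebraMap_eq_smul_one]
    exact CliffordAlgebra.ι_mul_ι_add_swap a b
  refine mem_iff.2 ⟨2 * (r * s) + QuadraticMap.polar (Qneg n) a b,
    (2 * s) • a + (2 * r) • b, ?_⟩
  rw [map_add, map_smul, map_smul]
  simp only [add_mul, mul_add, smul_mul_assoc, mul_smul_comm, one_mul, mul_one]
  rw [h2]
  module

lemma reverse_list_prod (l : List (CliffordAlgebra (Qneg n)))
    (hl : ∀ x ∈ l, reverse (Q := Qneg n) x = x) :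
    reverse (Q := Qneg n) l.prod = l.reverse.prod := by
  induction l with
  | nil => simp
  | cons a l ih =>
    rw [List.prod_cons, reverse.map_mul, hl a List.mem_cons_self,
      ih (fun x hx => hl x (List.mem_cons_of_mem a hx)), List.reverse_cons,
      List.prod_append, List.prod_singleton]

lemma ofFn_reverse {α : Type*} {m : ℕ} (f : Fin m → α) :
    (List.ofFn f).reverse = List.ofFn (fun i => f i.rev) := by
  apply List.ext_getElem
  · simp
  · intro i h1 h2
    simp only [List.length_reverse, List.length_ofFn] at h1
    rw [List.getElem_reverse, List.getElem_ofFn, List.getElem_ofFn]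
    congr 1
    ext
    simp [Fin.rev]
    omega

/-- the symmetrized sum -/
noncomputable def SymSum {m : ℕ} (u : Fin m → CliffordAlgebra (Qneg n)) :
    CliffordAlgebra (Qneg n) :=
  ∑ σ : Equiv.Perm (Fin m), (List.ofFn fun i => u (σ i)).prod

lemma reverse_symSum {m : ℕ} (u : Fin m → CliffordAlgebra (Qneg n))
    (hu : ∀ i, reverse (Q := Qneg n) (u i) = u i) :
    reverse (Q := Qneg n) (SymSum u) = SymSum u := by
  rw [SymSum, map_sum]
  rw [← Equiv.sum_comp (Equiv.mulRight (Fin.revPerm : Equiv.Perm (Fin m)))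
    (fun σ => (List.ofFn fun i => u (σ i)).prod)]
  refine Finset.sum_congr rfl fun σ _ => ?_
  rw [reverse_list_prod _ (by simp only [List.mem_ofFn]; rintro x ⟨i, rfl⟩; exact hu _),
    ofFn_reverse]
  rfl

lemma symSum_decomp {m : ℕ} (u : Fin (m + 1) → CliffordAlgebra (Qneg n)) :
    SymSum u = ∑ p : Fin (m + 1),
      u p * SymSum (fun i : Fin m => u (Equiv.swap 0 p i.succ)) := by
  rw [SymSum, ← Equiv.sum_comp (Equiv.Perm.decomposeFin (n := m)).symm
    (fun σ => (List.ofFn fun i => u (σ i)).prod), Fintype.sum_prod_type]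
  refine Finset.sum_congr rfl fun p _ => ?_
  rw [SymSum, Finset.mul_sum]
  refine Finset.sum_congr rfl fun e _ => ?_
  rw [List.ofFn_succ, List.prod_cons]
  simp

lemma symSum_mem {m : ℕ} (u : Fin m → CliffordAlgebra (Qneg n))
    (hu : ∀ i, u i ∈ Paravector n) : SymSum u ∈ Paravector n := by
  induction m with
  | zero =>
    have : SymSum u = 1 := by simp [SymSum]
    rw [this]
    simpa using smul_one_mem (n := n) 1
  | succ m ih =>
    have hT : ∀ p : Fin (m + 1),
        SymSum (fun i : Fin m => u (Equiv.swap 0 p i.succ)) ∈ Paravector n :=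
      fun p => ih _ (fun i => hu _)
    have hrev : reverse (Q := Qneg n) (SymSum u) = SymSum u :=
      reverse_symSum u (fun i => reverse_fix (hu i))
    have hsum : SymSum u + SymSum u ∈ Paravector n := by
      nth_rewrite 2 [← hrev]
      rw [symSum_decomp u]
      rw [map_sum, ← Finset.sum_add_distrib]
      refine Submodule.sum_mem _ fun p _ => ?_
      rw [reverse.map_mul, reverse_fix (hu p), reverse_fix (hT p), add_comm]
      exact anticomm_mem (hT p) (hu p)
    have h2 : (2⁻¹ : ℝ) • (SymSum u + SymSum u) = SymSum u := by
      rw [smul_add, ← add_smul]; norm_num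
    rw [← h2]
    exact Submodule.smul_mem _ _ hsum

end ParavectorAux

theorem symE_mem_paravector {n ℓ : ℕ} (hℓ : 1 ≤ ℓ)
    (u : Fin ℓ → CliffordAlgebra (Qneg n)) (hu : ∀ i, u i ∈ Paravector n) :
    symE u ∈ Paravector n :=
  Submodule.smul_mem _ _ (ParavectorAux.symSum_mem u hu)
end

section
/- More generally, for paravectors u, v in Cl(0,n) and any m ∈ ℕ, ∫₀¹ (t u + (1−t) v)^m dt = (1/(m+1)) Σ_{k=0}^m E(u^k v^{m−k}), where E(u^k v^{m−k}) denotes the symmetrized product of k copies of u and m−k copies of v. -/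
open CliffordAlgebra

open intervalIntegral in
lemma beta_nat : ∀ (b a : ℕ), (∫ t in (0:ℝ)..1, t ^ a * (1 - t) ^ b)
    = (a.factorial * b.factorial : ℝ) / (a + b + 1).factorial := by
  intro b
  induction b with
  | zero =>
    intro a
    simp only [pow_zero, mul_one, Nat.factorial_zero, Nat.cast_one, Nat.add_zero]
    rw [integral_pow, Nat.factorial_succ]
    have ha : ((a : ℝ) + 1) ≠ 0 := by positivity
    have hf : ((a.factorial : ℝ)) ≠ 0 := Nat.cast_ne_zero.mpr a.factorial_ne_zero
    rw [one_pow, zero_pow (Nat.succ_ne_zero a)]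
    push_cast
    field_simp
    norm_num
  | succ b ih =>
    intro a
    have ha : ((a : ℝ) + 1) ≠ 0 := by positivity
    have hu : ∀ x ∈ Set.uIcc (0:ℝ) 1, HasDerivAt (fun s : ℝ => (1 - s) ^ (b + 1))
        (-((b:ℝ) + 1) * (1 - x) ^ b) x := by
      intro x _
      have h1 : HasDerivAt (fun s : ℝ => 1 - s) (-1) x := (hasDerivAt_id x).const_sub 1
      have := h1.fun_pow (b + 1)
      refine this.congr_deriv ?_
      push_cast
      simp [Nat.add_sub_cancel]
      ring
    have hv : ∀ x ∈ Set.uIcc (0:ℝ) 1, HasDerivAt (fun s : ℝ => s ^ (a + 1) / ((a:ℝ) + 1))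
        (x ^ a) x := by
      intro x _
      have := (hasDerivAt_pow (a + 1) x).div_const ((a:ℝ) + 1)
      refine this.congr_deriv ?_
      simp only [Nat.add_sub_cancel]
      field_simp
      push_cast
      ring
    have hu' : IntervalIntegrable (fun x : ℝ => -((b:ℝ) + 1) * (1 - x) ^ b)
        MeasureTheory.volume 0 1 := (by fun_prop : Continuous fun x : ℝ => -((b:ℝ) + 1) * (1 - x) ^ b).intervalIntegrable _ _
    have hv' : IntervalIntegrable (fun x : ℝ => x ^ a) MeasureTheory.volume 0 1 :=
      (continuous_pow a).intervalIntegrable _ _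
    have parts := integral_mul_deriv_eq_deriv_mul hu hv hu' hv'
    have hcomm : (∫ t in (0:ℝ)..1, t ^ a * (1 - t) ^ (b + 1))
        = ∫ t in (0:ℝ)..1, (1 - t) ^ (b + 1) * t ^ a :=
      integral_congr fun x _ => mul_comm _ _
    rw [hcomm, parts]
    have h2 : (∫ x in (0:ℝ)..1, -((b:ℝ) + 1) * (1 - x) ^ b * (x ^ (a + 1) / ((a:ℝ) + 1)))
        = (-((b:ℝ) + 1) / ((a:ℝ) + 1)) * ∫ x in (0:ℝ)..1, x ^ (a + 1) * (1 - x) ^ b := by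
      rw [← integral_const_mul]
      exact integral_congr fun x _ => by field_simp
    rw [h2, ih (a + 1)]
    have harg : a + 1 + b + 1 = a + (b + 1) + 1 := by omega
    rw [harg]
    have hf : ((a + (b + 1) + 1).factorial : ℝ) ≠ 0 := Nat.cast_ne_zero.mpr (Nat.factorial_ne_zero _)
    rw [Nat.factorial_succ a, Nat.factorial_succ b]
    push_cast
    field_simp
    ring


namespace SegAux

set_option linter.unusedSectionVars false
variable {A : Type*} [Ring A] [Algebra ℝ A]

/-- ordered product of the word determined by `f` (`true` ↦ `u`, `false` ↦ `v`). -/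
def P (u v : A) {m : ℕ} (f : Fin m → Bool) : A :=
  (List.ofFn fun i => if f i then u else v).prod

/-- number of `true`s. -/
def cnt {m : ℕ} (f : Fin m → Bool) : ℕ := (Finset.univ.filter fun i => f i = true).card

lemma cnt_le {m : ℕ} (f : Fin m → Bool) : cnt f ≤ m := by
  simpa [cnt] using Finset.card_filter_le Finset.univ fun i => f i = true

lemma P_cons (u v : A) {m : ℕ} (c : Bool) (g : Fin m → Bool) :
    P u v (Fin.cons c g) = (if c then u else v) * P u v g := by
  simp [P, List.ofFn_succ, Fin.cons_zero, Fin.cons_succ]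

lemma expand (a b : A) (m : ℕ) : (a + b) ^ m = ∑ f : Fin m → Bool, P a b f := by
  induction m with
  | zero => simp [P]
  | succ m ih =>
    have h := Equiv.sum_comp (Fin.consEquiv fun _ : Fin (m + 1) => Bool)
      (fun f : Fin (m + 1) → Bool => P a b f)
    rw [← h]
    have h2 : ∀ p : Bool × (Fin m → Bool),
        P a b ((Fin.consEquiv fun _ : Fin (m + 1) => Bool) p)
          = (if p.1 then a else b) * P a b p.2 := fun p => P_cons a b p.1 p.2
    rw [Fintype.sum_prod_type]
    simp only [h2]
    rw [Fintype.sum_bool]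
    simp only [if_true, Bool.false_eq_true, if_false, ← Finset.mul_sum, ← ih]
    rw [pow_succ', add_mul]

lemma prod_ofFn_smul : ∀ {m : ℕ} (c : Fin m → ℝ) (w : Fin m → A),
    (List.ofFn fun i => c i • w i).prod = (∏ i, c i) • (List.ofFn w).prod
  | 0, c, w => by simp
  | (m + 1), c, w => by
    simp only [List.ofFn_succ, List.prod_cons, Fin.prod_univ_succ]
    rw [prod_ofFn_smul (fun i => c i.succ) (fun i => w i.succ), smul_mul_smul_comm]

lemma P_smul (t : ℝ) (u v : A) {m : ℕ} (f : Fin m → Bool) :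
    P (t • u) ((1 - t) • v) f = (t ^ cnt f * (1 - t) ^ (m - cnt f)) • P u v f := by
  have h1 : (fun i => if f i then t • u else (1 - t) • v)
      = fun i => (if f i then t else 1 - t) • (if f i then u else v) := by
    funext i; cases f i <;> simp
  rw [P, h1, prod_ofFn_smul, ← P]
  congr 1
  rw [Finset.prod_ite, Finset.prod_const, Finset.prod_const]
  have hcard : (Finset.univ.filter fun i => ¬ f i = true).card = m - cnt f := by
    have := Finset.card_filter_add_card_filter_not
      (s := (Finset.univ : Finset (Fin m))) (p := fun i => f i = true)
    simp only [Finset.card_univ, Fintype.card_fin] at this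
    unfold cnt
    omega
  rw [hcard]
  rfl
def S (m k : ℕ) : Finset (Fin m → Bool) := Finset.univ.filter fun f => cnt f = k

def W (u v : A) (m k : ℕ) : A := ∑ f ∈ S m k, P u v f

lemma card_filter_perm_lt {m k : ℕ} (σ : Equiv.Perm (Fin m)) :
    (Finset.univ.filter fun i => (σ i : ℕ) < k).card
      = (Finset.univ.filter fun j : Fin m => (j : ℕ) < k).card := by
  rw [← Finset.card_image_of_injective (Finset.univ.filter fun i => (σ i : ℕ) < k) σ.injective]
  congr 1
  ext j
  simp only [Finset.mem_image, Finset.mem_filter, Finset.mem_univ, true_and]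
  constructor
  · rintro ⟨i, hi, rfl⟩; exact hi
  · intro hj; exact ⟨σ.symm j, by simpa using hj, by simp⟩

lemma card_lt_fin {m k : ℕ} (hk : k ≤ m) :
    (Finset.univ.filter fun j : Fin m => (j : ℕ) < k).card = k := by
  apply Finset.card_eq_of_bijective (fun i hi => (⟨i, lt_of_lt_of_le hi hk⟩ : Fin m))
  · intro a ha
    simp only [Finset.mem_filter, Finset.mem_univ, true_and] at ha
    exact ⟨a, ha, by ext; rfl⟩
  · intro i hi; simp [hi]
  · intro i j hi hj h
    simpa using congrArg Fin.val h

lemma cnt_phi {m k : ℕ} (hk : k ≤ m) (σ : Equiv.Perm (Fin m)) :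
    cnt (fun i => decide ((σ i : ℕ) < k)) = k := by
  unfold cnt
  simp only [decide_eq_true_eq]
  rw [card_filter_perm_lt, card_lt_fin hk]

section Build

variable {m k : ℕ} {f : Fin m → Bool}

/-- Glue a bijection on the `true`-part and one on the `false`-part into a permutation. -/
def build (e₁ : {i : Fin m // f i = true} ≃ {j : Fin m // (j : ℕ) < k})
    (e₂ : {i : Fin m // ¬ f i = true} ≃ {j : Fin m // ¬ (j : ℕ) < k}) : Equiv.Perm (Fin m) :=
  (Equiv.sumCompl fun i => f i = true).symm.trans
    ((e₁.sumCongr e₂).trans (Equiv.sumCompl fun j : Fin m => (j : ℕ) < k))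

lemma build_pos (e₁ : {i : Fin m // f i = true} ≃ {j : Fin m // (j : ℕ) < k})
    (e₂ : {i : Fin m // ¬ f i = true} ≃ {j : Fin m // ¬ (j : ℕ) < k})
    {i : Fin m} (h : f i = true) : build e₁ e₂ i = (e₁ ⟨i, h⟩ : Fin m) := by
  have := Equiv.sumCompl_symm_apply_of_pos (p := fun i : Fin m => f i = true) h
  simp [build, this]

lemma build_neg (e₁ : {i : Fin m // f i = true} ≃ {j : Fin m // (j : ℕ) < k})
    (e₂ : {i : Fin m // ¬ f i = true} ≃ {j : Fin m // ¬ (j : ℕ) < k})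
    {i : Fin m} (h : ¬ f i = true) : build e₁ e₂ i = (e₂ ⟨i, h⟩ : Fin m) := by
  have := Equiv.sumCompl_symm_apply_of_neg (p := fun i : Fin m => f i = true) h
  simp [build, this]

lemma phi_build (e₁ : {i : Fin m // f i = true} ≃ {j : Fin m // (j : ℕ) < k})
    (e₂ : {i : Fin m // ¬ f i = true} ≃ {j : Fin m // ¬ (j : ℕ) < k}) (i : Fin m) :
    decide (((build e₁ e₂) i : ℕ) < k) = f i := by
  by_cases h : f i = true
  · rw [build_pos e₁ e₂ h, h]
    exact decide_eq_true (e₁ ⟨i, h⟩).2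
  · rw [build_neg e₁ e₂ h, decide_eq_false (e₂ ⟨i, h⟩).2]
    exact ((Bool.not_eq_true (f i)).mp h).symm

/-- The fiber of `σ ↦ (fun i => decide (σ i < k))` over `f`. -/
def fiberEquiv (f : Fin m → Bool) :
    {σ : Equiv.Perm (Fin m) // (fun i => decide ((σ i : ℕ) < k)) = f} ≃
      ({i : Fin m // f i = true} ≃ {j : Fin m // (j : ℕ) < k}) ×
        ({i : Fin m // ¬ f i = true} ≃ {j : Fin m // ¬ (j : ℕ) < k}) where
  toFun := fun ⟨σ, hσ⟩ =>
    have h : ∀ i, f i = true ↔ ((σ i : ℕ) < k) := fun i => by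
      rw [← congrFun hσ i]; simp
    (σ.subtypeEquiv h, σ.subtypeEquiv fun i => not_congr (h i))
  invFun := fun p => ⟨build p.1 p.2, funext (phi_build p.1 p.2)⟩
  left_inv := fun ⟨σ, hσ⟩ => by
    apply Subtype.ext
    ext i
    by_cases h : f i = true
    · rw [build_pos _ _ h]; rfl
    · rw [build_neg _ _ h]; rfl
  right_inv := fun ⟨e₁, e₂⟩ => by
    simp only [Prod.mk.injEq]
    constructor
    · refine Equiv.ext fun x => ?_
      obtain ⟨i, hi⟩ := x
      apply Subtype.ext
      simp only [Equiv.subtypeEquiv_apply]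
      exact build_pos e₁ e₂ hi
    · refine Equiv.ext fun x => ?_
      obtain ⟨i, hi⟩ := x
      apply Subtype.ext
      simp only [Equiv.subtypeEquiv_apply]
      exact build_neg e₁ e₂ hi

end Build
lemma card_true_of_mem {m k : ℕ} {f : Fin m → Bool} (hf : cnt f = k) :
    Fintype.card {i : Fin m // f i = true} = k := by
  rw [Fintype.card_subtype]; exact hf

lemma card_lt_subtype {m k : ℕ} (hk : k ≤ m) :
    Fintype.card {j : Fin m // (j : ℕ) < k} = k := by
  rw [Fintype.card_subtype]; exact card_lt_fin hk

lemma card_false_of_mem {m k : ℕ} (hk : k ≤ m) {f : Fin m → Bool} (hf : cnt f = k) :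
    Fintype.card {i : Fin m // ¬ f i = true} = m - k := by
  rw [Fintype.card_subtype_compl, card_true_of_mem hf, Fintype.card_fin]

lemma card_ge_subtype {m k : ℕ} (hk : k ≤ m) :
    Fintype.card {j : Fin m // ¬ (j : ℕ) < k} = m - k := by
  rw [Fintype.card_subtype_compl, card_lt_subtype hk, Fintype.card_fin]

lemma image_phi {m k : ℕ} (hk : k ≤ m) :
    (Finset.univ.image fun σ : Equiv.Perm (Fin m) => fun i => decide ((σ i : ℕ) < k))
      = S m k := by
  ext f
  simp only [Finset.mem_image, Finset.mem_univ, true_and, S, Finset.mem_filter]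
  constructor
  · rintro ⟨σ, rfl⟩; exact cnt_phi hk σ
  · intro hf
    have e₁ : {i : Fin m // f i = true} ≃ {j : Fin m // (j : ℕ) < k} :=
      Fintype.equivOfCardEq (by rw [card_true_of_mem hf, card_lt_subtype hk])
    have e₂ : {i : Fin m // ¬ f i = true} ≃ {j : Fin m // ¬ (j : ℕ) < k} :=
      Fintype.equivOfCardEq (by rw [card_false_of_mem hk hf, card_ge_subtype hk])
    exact ⟨build e₁ e₂, funext (phi_build e₁ e₂)⟩

lemma card_fiber {m k : ℕ} (hk : k ≤ m) {f : Fin m → Bool} (hf : cnt f = k) :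
    (Finset.univ.filter fun σ : Equiv.Perm (Fin m) =>
        (fun i => decide ((σ i : ℕ) < k)) = f).card
      = k.factorial * (m - k).factorial := by
  rw [← Fintype.card_subtype]
  rw [Fintype.card_congr (fiberEquiv f), Fintype.card_prod]
  have e₁ : {i : Fin m // f i = true} ≃ {j : Fin m // (j : ℕ) < k} :=
    Fintype.equivOfCardEq (by rw [card_true_of_mem hf, card_lt_subtype hk])
  have e₂ : {i : Fin m // ¬ f i = true} ≃ {j : Fin m // ¬ (j : ℕ) < k} :=
    Fintype.equivOfCardEq (by rw [card_false_of_mem hk hf, card_ge_subtype hk])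
  rw [Fintype.card_equiv e₁, Fintype.card_equiv e₂, card_true_of_mem hf,
    card_false_of_mem hk hf]

lemma perm_sum (u v : A) {m k : ℕ} (hk : k ≤ m) :
    (∑ σ : Equiv.Perm (Fin m), P u v fun i => decide ((σ i : ℕ) < k))
      = (k.factorial * (m - k).factorial) • W u v m k := by
  rw [Finset.sum_comp (P u v) (fun σ : Equiv.Perm (Fin m) => fun i => decide ((σ i : ℕ) < k))]
  rw [image_phi hk, W, Finset.smul_sum]
  refine Finset.sum_congr rfl fun f hf => ?_
  have hf' : cnt f = k := by simpa [S] using hf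
  rw [card_fiber hk hf']

lemma symL_comb (u v : A) {m k : ℕ} (hk : k ≤ m) :
    symL (List.replicate k u ++ List.replicate (m - k) v)
      = ((m.factorial : ℝ)⁻¹ * ((k.factorial : ℝ) * ((m - k).factorial : ℝ))) • W u v m k := by
  set L : List A := List.replicate k u ++ List.replicate (m - k) v with hL
  have hlen : L.length = m := by simp [hL, Nat.add_sub_cancel' hk]
  have hget : ∀ (i : ℕ) (h : i < L.length), L[i] = if i < k then u else v := by
    intro i h
    by_cases hik : i < k
    · rw [List.getElem_append_left (by simpa using hik)]
      simp [hik]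
    · rw [List.getElem_append_right (by simpa using hik)]
      simp [hik]
  have hsum : (∑ σ : Equiv.Perm (Fin L.length), (List.ofFn fun i => L.get (σ i)).prod)
      = ∑ τ : Equiv.Perm (Fin m), P u v fun i => decide ((τ i : ℕ) < k) := by
    refine Fintype.sum_equiv (Equiv.permCongr (finCongr hlen)) _ _ fun σ => ?_
    rw [P]
    congr 1
    refine List.ext_getElem (by simp [hlen]) fun i h1 h2 => ?_
    simp only [List.getElem_ofFn, List.get_eq_getElem]
    rw [hget]
    simp [Equiv.permCongr_apply, finCongr_apply, Fin.coe_cast, Fin.cast_mk,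
      decide_eq_true_eq]
  rw [symL, hsum, hlen, perm_sum u v hk, ← Nat.cast_smul_eq_nsmul ℝ, smul_smul]
  push_cast
  ring_nf

end SegAux

open SegAux in
theorem integral_pow_segment {n : ℕ} {A : Type*} [NormedRing A] [NormedAlgebra ℝ A]
    [CompleteSpace A] (e : CliffordAlgebra (Qneg n) ≃ₐ[ℝ] A)
    (u v : A) (hu : e.symm u ∈ Paravector n) (hv : e.symm v ∈ Paravector n) (m : ℕ) :
    ∫ t in (0:ℝ)..1, (t • u + (1 - t) • v) ^ m
      = ((m + 1 : ℝ))⁻¹ •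
          ∑ k ∈ Finset.range (m + 1),
            symL (List.replicate k u ++ List.replicate (m - k) v) := by
  have expand_t : ∀ t : ℝ, (t • u + (1 - t) • v) ^ m
      = ∑ f : Fin m → Bool, (t ^ cnt f * (1 - t) ^ (m - cnt f)) • P u v f := by
    intro t
    rw [SegAux.expand]
    exact Finset.sum_congr rfl fun f _ => P_smul t u v f
  calc ∫ t in (0:ℝ)..1, (t • u + (1 - t) • v) ^ m
      = ∫ t in (0:ℝ)..1, ∑ f : Fin m → Bool,
          (t ^ cnt f * (1 - t) ^ (m - cnt f)) • P u v f :=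
        intervalIntegral.integral_congr fun t _ => expand_t t
    _ = ∑ f : Fin m → Bool, ∫ t in (0:ℝ)..1,
          (t ^ cnt f * (1 - t) ^ (m - cnt f)) • P u v f := by
        refine intervalIntegral.integral_finset_sum fun f _ => ?_
        exact ((by fun_prop : Continuous fun t : ℝ =>
          (t ^ cnt f * (1 - t) ^ (m - cnt f)) • P u v f)).intervalIntegrable _ _
    _ = ∑ f : Fin m → Bool,
          (((cnt f).factorial : ℝ) * ((m - cnt f).factorial : ℝ) / ((m + 1).factorial : ℝ))
            • P u v f := by
        refine Finset.sum_congr rfl fun f _ => ?_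
        rw [intervalIntegral.integral_smul_const, beta_nat]
        have h : cnt f + (m - cnt f) + 1 = m + 1 := by
          have := cnt_le f; omega
        rw [h]
    _ = ∑ k ∈ Finset.range (m + 1),
          (((k).factorial : ℝ) * ((m - k).factorial : ℝ) / ((m + 1).factorial : ℝ))
            • W u v m k := by
        rw [← Finset.sum_fiberwise_of_maps_to
          (fun f _ => Finset.mem_range.mpr (Nat.lt_succ_of_le (cnt_le f)))
          (fun f => (((cnt f).factorial : ℝ) * ((m - cnt f).factorial : ℝ)
            / ((m + 1).factorial : ℝ)) • P u v f)]
        refine Finset.sum_congr rfl fun k _ => ?_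
        rw [W, Finset.smul_sum]
        refine Finset.sum_congr rfl fun f hf => ?_
        have hf' : cnt f = k := (Finset.mem_filter.mp hf).2
        rw [hf']
    _ = ((m + 1 : ℝ))⁻¹ • ∑ k ∈ Finset.range (m + 1),
          symL (List.replicate k u ++ List.replicate (m - k) v) := by
        rw [Finset.smul_sum]
        refine Finset.sum_congr rfl fun k hk => ?_
        have hk' : k ≤ m := Nat.lt_succ_iff.mp (Finset.mem_range.mp hk)
        rw [symL_comb u v hk', smul_smul]
        congr 1
        rw [Nat.factorial_succ]
        have h1 : ((m + 1 : ℕ) : ℝ) ≠ 0 := by positivity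
        have h2 : ((m.factorial : ℕ) : ℝ) ≠ 0 := Nat.cast_ne_zero.mpr m.factorial_ne_zero
        push_cast
        field_simp
end

section
/- Derivation rule: for a paravector u ∈ S ⊕ V, an element a ∈ Cl(0,n), and p ∈ ℕ with p ≥ 1, the directional derivative (u|∇_x) applied to x ↦ Sym(a x^p) (x ranging over paravectors) equals p · Sym(a u x^{p−1}), where Sym(a x^p) denotes the symmetrized product of a with p copies of x. For p = 0 the derivative is 0. -/
open CliffordAlgebra

/-- the paravector with coordinates `c : Fin (n+1) → ℝ`, transported to `A`. -/
noncomputable def pv {n : ℕ} {A : Type*} [NormedRing A] [NormedAlgebra ℝ A]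
    (e : CliffordAlgebra (Qneg n) ≃ₐ[ℝ] A) (c : Fin (n + 1) → ℝ) : A :=
  e (algebraMap ℝ (CliffordAlgebra (Qneg n)) (c 0) + ι (Qneg n) (fun i => c i.succ))

section Aux

variable {A : Type*} [NormedRing A] [NormedAlgebra ℝ A]

/-- the symmetrized product as a continuous multilinear map -/
noncomputable def symCM (ℓ : ℕ) (A : Type*) [NormedRing A] [NormedAlgebra ℝ A] :
    ContinuousMultilinearMap ℝ (fun _ : Fin ℓ => A) A :=
  ((ℓ.factorial : ℝ)⁻¹) •
    ∑ σ : Equiv.Perm (Fin ℓ), ContinuousMultilinearMap.domDomCongr σ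
      (ContinuousMultilinearMap.mkPiAlgebraFin ℝ ℓ A)

lemma symCM_apply (ℓ : ℕ) (u : Fin ℓ → A) :
    symCM ℓ A u = ((ℓ.factorial : ℝ)⁻¹) •
      ∑ σ : Equiv.Perm (Fin ℓ), (List.ofFn fun i => u (σ i)).prod := by
  simp [symCM]

lemma symCM_comp_perm (ℓ : ℕ) (u : Fin ℓ → A) (π : Equiv.Perm (Fin ℓ)) :
    symCM ℓ A (u ∘ π) = symCM ℓ A u := by
  rw [symCM_apply, symCM_apply]
  congr 1
  rw [← Equiv.sum_comp (Equiv.mulLeft π)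
    (fun σ : Equiv.Perm (Fin ℓ) => (List.ofFn fun i => u (σ i)).prod)]
  refine Finset.sum_congr rfl fun σ _ => ?_
  simp [Function.comp, Equiv.Perm.mul_apply]

lemma symL_eq_symCM (L : List A) {ℓ : ℕ} (h : L.length = ℓ) (u : Fin ℓ → A)
    (hu : ∀ i : Fin ℓ, u i = L.get (Fin.cast h.symm i)) : symL L = symCM ℓ A u := by
  subst h
  have hu' : u = L.get := funext fun i => hu i
  rw [hu', symCM_apply]
  rfl

lemma get_cons_replicate (a v : A) (m : ℕ) (i : Fin (a :: List.replicate m v).length) :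
    (a :: List.replicate m v).get i = if (i : ℕ) = 0 then a else v := by
  rcases i with ⟨k, hk⟩
  cases k with
  | zero => rfl
  | succ k =>
    simp only [List.get_eq_getElem, List.getElem_cons_succ]
    rw [List.getElem_replicate]
    simp

lemma get_cons_cons_replicate (a b v : A) (m : ℕ)
    (i : Fin (a :: b :: List.replicate m v).length) :
    (a :: b :: List.replicate m v).get i =
      if (i : ℕ) = 0 then a else if (i : ℕ) = 1 then b else v := by
  rcases i with ⟨k, hk⟩
  match k with
  | 0 => rfl
  | 1 => rfl
  | (k + 2) =>
    simp only [List.get_eq_getElem, List.getElem_cons_succ]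
    rw [List.getElem_replicate]
    simp

lemma update_eq_comp_swap (a U X : A) (q : ℕ) (j : Fin (q + 1)) :
    Function.update (fun i : Fin (q + 2) => if (i : ℕ) = 0 then a else X) j.succ U
      = (fun i : Fin (q + 2) => if (i : ℕ) = 0 then a else if (i : ℕ) = 1 then U else X)
          ∘ (Equiv.swap 1 j.succ) := by
  funext i
  have hj : ((j.succ : Fin (q + 2)) : ℕ) = (j : ℕ) + 1 := rfl
  have h1 : ((1 : Fin (q + 2)) : ℕ) = 1 := rfl
  simp only [Function.comp, Function.update_apply, Equiv.swap_apply_def]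
  split_ifs <;> first
    | rfl
    | (exfalso; simp only [Fin.ext_iff] at *; omega)

end Aux

theorem directional_derivative_symL {n : ℕ} {A : Type*} [NormedRing A]
    [NormedAlgebra ℝ A] [CompleteSpace A] (e : CliffordAlgebra (Qneg n) ≃ₐ[ℝ] A)
    (a : A) (x u : Fin (n + 1) → ℝ) :
    (∀ p : ℕ, 1 ≤ p →
      fderiv ℝ (fun c : Fin (n + 1) → ℝ => symL (a :: List.replicate p (pv e c))) x u
        = (p : ℝ) • symL (a :: pv e u :: List.replicate (p - 1) (pv e x)))
    ∧ fderiv ℝ (fun c : Fin (n + 1) → ℝ => symL (a :: List.replicate 0 (pv e c))) x u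
        = 0 := by
  classical
  -- the linear map `c ↦ pv e c`
  set T₀ : (Fin (n + 1) → ℝ) →ₗ[ℝ] A :=
    e.toLinearMap ∘ₗ ((Algebra.linearMap ℝ (CliffordAlgebra (Qneg n)) ∘ₗ LinearMap.proj 0)
      + ((ι (Qneg n)) ∘ₗ LinearMap.funLeft ℝ ℝ Fin.succ)) with hT₀def
  have hT₀ : ∀ c, T₀ c = pv e c := by
    intro c
    simp [hT₀def, pv, LinearMap.funLeft, Function.comp_def]
  set T : (Fin (n + 1) → ℝ) →L[ℝ] A := ⟨T₀, T₀.continuous_of_finiteDimensional⟩ with hTdef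
  have hT : ∀ c, T c = pv e c := hT₀
  constructor
  · intro p hp
    obtain ⟨q, rfl⟩ : ∃ q, p = q + 1 := ⟨p - 1, by omega⟩
    set g : Fin (q + 2) → (Fin (n + 1) → ℝ) → A :=
      fun i c => if (i : ℕ) = 0 then a else pv e c with hg_def
    set g' : Fin (q + 2) → (Fin (n + 1) → ℝ) →L[ℝ] A :=
      fun i => if (i : ℕ) = 0 then 0 else T with hg'_def
    have hg : ∀ i, HasFDerivAt (g i) (g' i) x := by
      intro i
      by_cases h : (i : ℕ) = 0
      · have h' : i = 0 := by simpa using h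
        simpa [hg_def, hg'_def, h, h'] using hasFDerivAt_const (𝕜 := ℝ) a x
      · have h' : i ≠ 0 := by simpa using h
        have : g i = fun c => T c := by funext c; simp [hg_def, h, h', hT]
        rw [this]
        simpa [hg'_def, h, h'] using T.hasFDerivAt
    have hfun : (fun c : Fin (n + 1) → ℝ => symL (a :: List.replicate (q + 1) (pv e c)))
        = fun c => symCM (q + 2) A (fun i => g i c) := by
      funext c
      refine symL_eq_symCM _ (by simp) _ (fun i => ?_)
      rw [get_cons_replicate]
      rfl
    have hrhs : symL (a :: pv e u :: List.replicate q (pv e x))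
        = symCM (q + 2) A (fun i => if (i : ℕ) = 0 then a else
            if (i : ℕ) = 1 then pv e u else pv e x) := by
      refine symL_eq_symCM _ (by simp) _ (fun i => ?_)
      rw [get_cons_cons_replicate]
      rfl
    have hder := HasFDerivAt.multilinear_comp (symCM (q + 2) A) hg
    rw [hfun, hder.fderiv]
    have happ : (∑ i : Fin (q + 2),
          ((symCM (q + 2) A).toContinuousLinearMap (fun j => g j x) i) ∘L (g' i)) u
        = ∑ i : Fin (q + 2),
            symCM (q + 2) A (Function.update (fun j => g j x) i (g' i u)) := by
      simp [ContinuousLinearMap.sum_apply]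
    rw [happ, Fin.sum_univ_succ]
    have h0 : symCM (q + 2) A
        (Function.update (fun j => g j x) (0 : Fin (q + 2)) (g' 0 u)) = 0 := by
      refine (symCM (q + 2) A).map_coord_zero (0 : Fin (q + 2)) ?_
      simp [hg'_def]
    have hsucc : ∀ j : Fin (q + 1),
        symCM (q + 2) A (Function.update (fun j => g j x) (Fin.succ j) (g' j.succ u))
          = symL (a :: pv e u :: List.replicate q (pv e x)) := by
      intro j
      have hgx : (fun j : Fin (q + 2) => g j x)
          = fun i : Fin (q + 2) => if (i : ℕ) = 0 then a else pv e x := rfl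
      have hgu : g' j.succ u = pv e u := by
        simp [hg'_def, hT]
      rw [hgx, hgu, update_eq_comp_swap, symCM_comp_perm, hrhs]
    rw [h0, zero_add, Finset.sum_congr rfl (fun j _ => hsucc j), Finset.sum_const]
    simp only [Finset.card_univ, Fintype.card_fin]
    rw [← Nat.cast_smul_eq_nsmul ℝ]
    norm_num
  · have hconst : (fun c : Fin (n + 1) → ℝ => symL (a :: List.replicate 0 (pv e c)))
        = fun _ => symL [a] := rfl
    rw [hconst, fderiv_fun_const]
    simp
end

section
/- Resolvent difference identity: for paravectors a, b, x in Cl(0,n) such that x − (t a + (1−t) b) is invertible for all t ∈ [0,1], we have (x − a)^{-1} − (x − b)^{-1} = ∫₀¹ (x − (t a + (1−t) b))^{-1} (a − b) (x − (t a + (1−t) b))^{-1} dt. -/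
open CliffordAlgebra

theorem resolvent_difference {n : ℕ} {A : Type*} [NormedRing A] [NormedAlgebra ℝ A]
    [CompleteSpace A] (e : CliffordAlgebra (Qneg n) ≃ₐ[ℝ] A)
    (a b x : A) (ha : e.symm a ∈ Paravector n) (hb : e.symm b ∈ Paravector n)
    (hx : e.symm x ∈ Paravector n)
    (hunit : ∀ t ∈ Set.Icc (0:ℝ) 1, IsUnit (x - (t • a + (1 - t) • b))) :
    Ring.inverse (x - a) - Ring.inverse (x - b)
      = ∫ t in (0:ℝ)..1,
          Ring.inverse (x - (t • a + (1 - t) • b)) * (a - b) *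
            Ring.inverse (x - (t • a + (1 - t) • b)) := by
  set g : ℝ → A := fun t => x - (t • a + (1 - t) • b) with hg
  set f : ℝ → A := fun t => Ring.inverse (g t) with hf
  have hg1 : g 1 = x - a := by simp [hg]
  have hg0 : g 0 = x - b := by simp [hg]
  have hderg : ∀ t : ℝ, HasDerivAt g (-(a - b)) t := by
    intro t
    have h1 : HasDerivAt (fun t : ℝ => t • a) a t := by
      simpa using (hasDerivAt_id t).smul_const a
    have h2 : HasDerivAt (fun t : ℝ => (1 - t) • b) (-b) t := by
      have : HasDerivAt (fun t : ℝ => (1 - t)) (-1) t := by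
        simpa using (hasDerivAt_id t).const_sub 1
      simpa using this.smul_const b
    have h3 := ((h1.add h2).const_sub x)
    convert h3 using 1
    · rfl
    · rfl
    abel
  have key : ∀ t ∈ Set.uIcc (0:ℝ) 1,
      HasDerivAt f (f t * (a - b) * f t) t := by
    intro t ht
    have hu : IsUnit (g t) := hunit t (by rwa [Set.uIcc_of_le zero_le_one] at ht)
    have hfi : f t = ↑hu.unit⁻¹ := by
      show Ring.inverse (g t) = ↑hu.unit⁻¹
      conv_lhs => rw [← hu.unit_spec]
      rw [Ring.inverse_unit]
    have h1 := hasFDerivAt_ringInverse (𝕜 := ℝ) hu.unit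
    rw [hu.unit_spec] at h1
    have h2 := h1.comp_hasDerivAt t (hderg t)
    convert h2 using 1
    · rfl
    · rfl
    simp [hfi, mul_assoc, sub_mul, mul_sub]
  have hcont : ContinuousOn (fun t => f t * (a - b) * f t) (Set.uIcc (0:ℝ) 1) := by
    intro t ht
    exact (((key t ht).continuousAt.mul continuousAt_const).mul
      (key t ht).continuousAt).continuousWithinAt
  have hint : IntervalIntegrable (fun t => f t * (a - b) * f t)
      MeasureTheory.volume 0 1 := hcont.intervalIntegrable
  have := intervalIntegral.integral_eq_sub_of_hasDerivAt key hint
  rw [this, hf]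
  simp [hg1, hg0]
end
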